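/- arXiv:gr-qc/0211106 — 4 statements merged into one kernel-verified Lean document; each statement's English description precedes it below -/
import Mathlib

section
/- Let G be a compact topological group equipped with its Borel σ-algebra and let μ be the normalized Haar probability measure on G. Let ρ and τ be continuous unitary representations of G on finite-dimensional complex inner product spaces V and W respectively, and let χ_τ(g) = tr τ(g) denote the character of τ. Then the operator A = ∫_G χ_τ(g) · ρ(g) dμ(g) on V is positive: A is self-adjoint and ⟨v, A v⟩ is a nonnegative real number for every v ∈ V. -/
open MeasureTheory
open scoped ComplexInnerProductSpace ComplexOrder

/-- Trace of a continuous linear operator as a sum of diagonal inner products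
against an orthonormal basis. -/
lemma clm_trace_eq_sum_inner {E : Type*} [NormedAddCommGroup E] [InnerProductSpace ℂ E]
    [FiniteDimensional ℂ E] {ι : Type*} [Fintype ι] [DecidableEq ι]
    (b : OrthonormalBasis ι ℂ E) (T : E →L[ℂ] E) :
    LinearMap.trace ℂ E (T : E →ₗ[ℂ] E) = ∑ i, ⟪b i, T (b i)⟫ := by
  rw [LinearMap.trace_eq_matrix_trace ℂ b.toBasis, Matrix.trace]
  refine Finset.sum_congr rfl fun i _ => ?_
  rw [Matrix.diag_apply, LinearMap.toMatrix_apply, OrthonormalBasis.coe_toBasis,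
    OrthonormalBasis.coe_toBasis_repr_apply, OrthonormalBasis.repr_apply_apply]
  rfl

/-- For a unitary representation, `⟪x, π (h⁻¹ * g) y⟫ = ⟪π h x, π g y⟫`. -/
lemma inner_rep_inv_mul {G E : Type*} [Group G] [NormedAddCommGroup E]
    [InnerProductSpace ℂ E] (π : G →* (E →L[ℂ] E))
    (hu : ∀ (g : G) (x y : E), ⟪π g x, π g y⟫ = ⟪x, y⟫) (h g : G) (x y : E) :
    ⟪x, π (h⁻¹ * g) y⟫ = ⟪π h x, π g y⟫ := by
  rw [← hu h x (π (h⁻¹ * g) y)]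
  congr 1
  have h1 : π h (π (h⁻¹ * g) y) = (π h * π (h⁻¹ * g)) y := rfl
  rw [h1, ← map_mul, mul_inv_cancel_left]

/-- For continuous unitary representations `ρ` (on `V`) and `τ` (on `W`) of a compact group `G`,
the operator `A = ∫ G χ_τ(g) • ρ(g) dμ(g)`, where `χ_τ(g) = tr τ(g)` is the character of `τ`,
is positive: it is self-adjoint and `⟪v, A v⟫` is a nonnegative real number for every `v`. -/
theorem character_weighted_haar_intertwiner_positive
    {G : Type*} [Group G] [TopologicalSpace G] [IsTopologicalGroup G]
    [CompactSpace G] [MeasurableSpace G] [BorelSpace G]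
    (μ : Measure G) [Measure.IsHaarMeasure μ] [IsProbabilityMeasure μ]
    {V : Type*} [NormedAddCommGroup V] [InnerProductSpace ℂ V] [FiniteDimensional ℂ V]
    {W : Type*} [NormedAddCommGroup W] [InnerProductSpace ℂ W] [FiniteDimensional ℂ W]
    (ρ : G →* (V →L[ℂ] V)) (τ : G →* (W →L[ℂ] W))
    (hρ_unitary : ∀ (g : G) (v w : V), ⟪ρ g v, ρ g w⟫ = ⟪v, w⟫)
    (hρ_cont : ∀ v : V, Continuous fun g : G => ρ g v)
    (hτ_unitary : ∀ (g : G) (v w : W), ⟪τ g v, τ g w⟫ = ⟪v, w⟫)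
    (hτ_cont : ∀ v : W, Continuous fun g : G => τ g v) :
    IsSelfAdjoint (∫ g, (LinearMap.trace ℂ W (τ g : W →ₗ[ℂ] W)) • ρ g ∂μ) ∧
      ∀ v : V, 0 ≤ ⟪v, (∫ g, (LinearMap.trace ℂ W (τ g : W →ₗ[ℂ] W)) • ρ g ∂μ) v⟫ := by
  classical
  set χ : G → ℂ := fun g => LinearMap.trace ℂ W (τ g : W →ₗ[ℂ] W) with hχdef
  -- integrable of continuous on compact probability space
  have int_of_cont : ∀ {f : G → ℂ}, Continuous f → Integrable f μ := fun hf =>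
    hf.integrable_of_hasCompactSupport ((isClosed_tsupport _).isCompact)
  set bW := stdOrthonormalBasis ℂ W with hbW
  set bV := stdOrthonormalBasis ℂ V with hbV
  have hχ_eq : ∀ g, χ g = ∑ i, ⟪bW i, τ g (bW i)⟫ := fun g => clm_trace_eq_sum_inner bW (τ g)
  -- the key positivity statement
  have key : ∀ v : V, 0 ≤ ⟪v, (∫ g, χ g • ρ g ∂μ) v⟫ := by
    intro v
    by_cases hF : Integrable (fun g => χ g • ρ g) μ
    swap
    · rw [integral_undef hF]
      simp
    -- index type and matrix coefficients
    set a : ((Fin (Module.finrank ℂ W) × Fin (Module.finrank ℂ W)) × Fin (Module.finrank ℂ V)) →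
        G → ℂ := fun p g => ⟪bW p.1.2, τ g (bW p.1.1)⟫ * ⟪bV p.2, ρ g v⟫ with hadef
    have ha_cont : ∀ p, Continuous (a p) := fun p =>
      (continuous_const.inner (hτ_cont _)).mul (continuous_const.inner (hρ_cont _))
    have hInt_a : ∀ p, Integrable (a p) μ := fun p => int_of_cont (ha_cont p)
    set I : ((Fin (Module.finrank ℂ W) × Fin (Module.finrank ℂ W)) ×
        Fin (Module.finrank ℂ V)) → ℂ := fun p => ∫ g, a p g ∂μ with hIdef
    set S : G → ℂ := fun g => χ g * ⟪v, ρ g v⟫ with hSdef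
    -- step 1: push the inner product inside the integral
    have h1 : ⟪v, (∫ g, χ g • ρ g ∂μ) v⟫ = ∫ g, S g ∂μ := by
      set L : (V →L[ℂ] V) →L[ℂ] ℂ := (innerSL ℂ v).comp (ContinuousLinearMap.apply ℂ V v)
        with hLdef
      have hL : ∀ T : V →L[ℂ] V, L T = ⟪v, T v⟫ := fun T => rfl
      calc ⟪v, (∫ g, χ g • ρ g ∂μ) v⟫ = L (∫ g, χ g • ρ g ∂μ) := (hL _).symm
        _ = ∫ g, L (χ g • ρ g) ∂μ := (L.integral_comp_comm hF).symm
        _ = ∫ g, S g ∂μ := by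
            refine integral_congr_ae (Filter.Eventually.of_forall fun g => ?_)
            show L (χ g • ρ g) = S g
            rw [hL, ContinuousLinearMap.smul_apply, inner_smul_right]
    -- step 2: pointwise identity after left translation
    have h3 : ∀ h g : G, S (h⁻¹ * g) = ∑ p, (starRingEnd ℂ) (a p h) * a p g := by
      intro h g
      have hτi : χ (h⁻¹ * g)
          = ∑ i, ∑ k, (starRingEnd ℂ) ⟪bW k, τ h (bW i)⟫ * ⟪bW k, τ g (bW i)⟫ := by
        rw [hχ_eq]
        refine Finset.sum_congr rfl fun i _ => ?_
        rw [inner_rep_inv_mul τ hτ_unitary h g,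
          ← bW.sum_inner_mul_inner (τ h (bW i)) (τ g (bW i))]
        refine Finset.sum_congr rfl fun k _ => ?_
        rw [inner_conj_symm]
      have hρi : ⟪v, ρ (h⁻¹ * g) v⟫
          = ∑ j, (starRingEnd ℂ) ⟪bV j, ρ h v⟫ * ⟪bV j, ρ g v⟫ := by
        rw [inner_rep_inv_mul ρ hρ_unitary h g,
          ← bV.sum_inner_mul_inner (ρ h v) (ρ g v)]
        refine Finset.sum_congr rfl fun j _ => ?_
        rw [inner_conj_symm]
      have expand : S (h⁻¹ * g)
          = (∑ q : Fin (Module.finrank ℂ W) × Fin (Module.finrank ℂ W),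
              (starRingEnd ℂ) ⟪bW q.2, τ h (bW q.1)⟫ * ⟪bW q.2, τ g (bW q.1)⟫)
            * (∑ j, (starRingEnd ℂ) ⟪bV j, ρ h v⟫ * ⟪bV j, ρ g v⟫) := by
        rw [hSdef]; dsimp only; rw [hτi, hρi, Fintype.sum_prod_type]
      symm
      rw [Fintype.sum_prod_type, expand, Finset.sum_mul_sum]
      refine Finset.sum_congr rfl fun q _ => Finset.sum_congr rfl fun j _ => ?_
      simp only [hadef, map_mul]
      ring
    -- step 3: inner integral
    have h4 : ∀ h : G, ∫ g, S (h⁻¹ * g) ∂μ = ∑ p, (starRingEnd ℂ) (a p h) * I p := by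
      intro h
      calc ∫ g, S (h⁻¹ * g) ∂μ = ∫ g, ∑ p, (starRingEnd ℂ) (a p h) * a p g ∂μ := by
            refine integral_congr_ae (Filter.Eventually.of_forall fun g => ?_)
            exact h3 h g
        _ = ∑ p, ∫ g, (starRingEnd ℂ) (a p h) * a p g ∂μ :=
            integral_finset_sum _ (fun p _ => (hInt_a p).const_mul _)
        _ = ∑ p, (starRingEnd ℂ) (a p h) * I p := by
            refine Finset.sum_congr rfl fun p _ => ?_
            exact integral_const_mul _ _
    -- step 4: outer integral
    have h5 : ∫ h, ∑ p, (starRingEnd ℂ) (a p h) * I p ∂μ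
        = ∑ p, (starRingEnd ℂ) (I p) * I p := by
      refine (integral_finset_sum _ fun p _ => ?_).trans ?_
      · exact (int_of_cont (Complex.continuous_conj.comp (ha_cont p))).mul_const _
      refine Finset.sum_congr rfl fun p _ => ?_
      rw [integral_mul_const, integral_conj]
    -- step 5: use left invariance of μ
    have h2 : ∫ g, S g ∂μ = ∑ p, (starRingEnd ℂ) (I p) * I p := by
      have hinv : ∀ h : G, ∫ g, S (h⁻¹ * g) ∂μ = ∫ g, S g ∂μ := fun h =>
        integral_mul_left_eq_self S h⁻¹
      calc ∫ g, S g ∂μ = ∫ h, ∫ g, S (h⁻¹ * g) ∂μ ∂μ := by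
            simp_rw [hinv]
            simp [measure_univ]
        _ = ∫ h, ∑ p, (starRingEnd ℂ) (a p h) * I p ∂μ := by
            refine integral_congr_ae (Filter.Eventually.of_forall fun h => ?_)
            exact h4 h
        _ = ∑ p, (starRingEnd ℂ) (I p) * I p := h5
    rw [h1, h2]
    refine Finset.sum_nonneg fun p _ => ?_
    rw [starRingEnd_apply]
    exact star_mul_self_nonneg (I p)
  refine ⟨?_, key⟩
  -- self-adjointness follows from the quadratic form being real
  rw [ContinuousLinearMap.isSelfAdjoint_iff_isSymmetric]
  rw [LinearMap.isSymmetric_iff_inner_map_self_real]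
  intro x
  set A := ∫ g, χ g • ρ g ∂μ with hAdef
  have h0 := key x
  have him : (⟪x, A x⟫).im = 0 := by
    have := (Complex.le_def.mp h0).2
    simpa using this.symm
  have hconj : (starRingEnd ℂ) ⟪x, A x⟫ = ⟪x, A x⟫ := Complex.conj_eq_iff_im.mpr him
  have e1 : (⟪A x, x⟫ : ℂ) = (starRingEnd ℂ) ⟪x, A x⟫ := (inner_conj_symm (A x) x).symm
  rw [show ((A : V →L[ℂ] V) : V →ₗ[ℂ] V) x = A x from rfl] at *
  rw [e1, hconj, ← e1, e1, hconj]
end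

section
/- Let G be a compact topological group equipped with its Borel σ-algebra and let μ be the normalized Haar probability measure on G. Let σ₁ and σ₂ be continuous unitary matrix representations of G of dimensions n₁ and n₂, and let τ be a continuous unitary matrix representation of G with character χ_τ. Set A = ∫_G χ_τ(g) · σ₁(g) dμ(g) (an n₁×n₁ matrix) and T = ∫_G σ₁(g) ⊗ₖ σ₂(g) dμ(g) (an (n₁·n₂)×(n₁·n₂) matrix). Then the product (A ⊗ₖ I_{n₂}) * T is positive semidefinite. -/
open MeasureTheory Matrix
open scoped Kronecker ComplexOrder

set_option linter.unusedSectionVars false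
set_option maxHeartbeats 1000000

section Aux

theorem kron_conjT {l n : Type*} (X : Matrix l l ℂ) (Y : Matrix n n ℂ) :
    (X ⊗ₖ Y)ᴴ = Xᴴ ⊗ₖ Yᴴ := by
  ext ⟨i, j⟩ ⟨i', j'⟩
  simp [conjTranspose_apply, Matrix.kroneckerMap_apply, star_mul']

theorem star_ite' (P : Prop) [Decidable P] (x y : ℂ) :
    star (if P then x else y) = if P then star x else star y := by split <;> rfl

theorem WNW {n₁ n₂ m : ℕ}
    (M : Matrix (((Fin n₁ × Fin n₂) × Fin m) × Fin m) (((Fin n₁ × Fin n₂) × Fin m) × Fin m) ℂ)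
    (a b : Fin n₁ × Fin n₂) :
    ((Matrix.of fun (p : ((Fin n₁ × Fin n₂) × Fin m) × Fin m) (c : Fin n₁ × Fin n₂) =>
        (if p.1.1 = c then (1:ℂ) else 0) * (if p.2 = p.1.2 then (1:ℂ) else 0))ᴴ * M *
      (Matrix.of fun (p : ((Fin n₁ × Fin n₂) × Fin m) × Fin m) (c : Fin n₁ × Fin n₂) =>
        (if p.1.1 = c then (1:ℂ) else 0) * (if p.2 = p.1.2 then (1:ℂ) else 0))) a b
    = ∑ k : Fin m, ∑ k' : Fin m, M ((a,k),k) ((b,k'),k') := by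
  simp only [Matrix.mul_apply, Matrix.conjTranspose_apply, Matrix.of_apply,
    star_mul', star_ite', star_one, star_zero, Fintype.sum_prod_type, ite_mul, mul_ite,
    one_mul, mul_one, zero_mul, mul_zero, Prod.mk.injEq, ite_and,
    Finset.sum_ite_eq, Finset.sum_ite_eq', Finset.mem_univ, if_true,
    Finset.sum_const_zero, Finset.sum_ite_irrel]
  exact Finset.sum_comm ..

variable {G : Type*} [Group G] [TopologicalSpace G] [IsTopologicalGroup G]
    [CompactSpace G] [MeasurableSpace G] [BorelSpace G]
    (μ : Measure G) [Measure.IsHaarMeasure μ] [IsProbabilityMeasure μ]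

theorem myRightInv : μ.IsMulRightInvariant := by
  constructor
  intro g
  haveI : IsProbabilityMeasure (Measure.map (· * g) μ) :=
    Measure.isProbabilityMeasure_map (measurable_mul_const g).aemeasurable
  exact Measure.isHaarMeasure_eq_of_isProbabilityMeasure _ μ

theorem myInvInv : μ.IsInvInvariant := by
  haveI := myRightInv μ
  haveI : IsProbabilityMeasure μ.inv :=
    Measure.isProbabilityMeasure_map measurable_inv.aemeasurable
  haveI : μ.inv.IsHaarMeasure :=
    { toIsFiniteMeasureOnCompacts := inferInstance
      toIsMulLeftInvariant := inferInstance
      toIsOpenPosMeasure := inferInstance }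
  exact ⟨Measure.isHaarMeasure_eq_of_isProbabilityMeasure _ μ⟩

theorem myIntegrable {f : G → ℂ} (hf : Continuous f) : Integrable f μ :=
  hf.integrable_of_hasCompactSupport (HasCompactSupport.of_compactSpace f)

variable {ι : Type*} [Fintype ι]

theorem matInt_inner (f k : G → Matrix ι ι ℂ)
    (hk : ∀ a b, Continuous fun g => k g a b) (g : G) (a b : ι) :
    (∫ h, (f g * k h) a b ∂μ) = ∑ c, f g a c * ∫ h, k h c b ∂μ := by
  simp only [Matrix.mul_apply]
  rw [integral_finset_sum _ (fun c _ => (myIntegrable μ (f := fun h => f g a c * k h c b) (continuous_const.mul (hk c b))))]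
  exact Finset.sum_congr rfl fun c _ => integral_const_mul _ _

/-- Product of entrywise integrals, outer variable in the first factor. -/
theorem matInt_mul (f k : G → Matrix ι ι ℂ)
    (hf : ∀ a b, Continuous fun g => f g a b) (hk : ∀ a b, Continuous fun g => k g a b)
    (a b : ι) :
    ((Matrix.of fun a b => ∫ g, f g a b ∂μ) * (Matrix.of fun a b => ∫ g, k g a b ∂μ)) a b
      = ∫ g, ∫ h, (f g * k h) a b ∂μ ∂μ := by
  simp_rw [matInt_inner μ f k hk _ a b]
  rw [integral_finset_sum _ (fun c _ => (myIntegrable μ (f := fun g => f g a c * ∫ h, k h c b ∂μ) ((hf a c).mul continuous_const)))]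
  simp only [Matrix.mul_apply, Matrix.of_apply]
  exact Finset.sum_congr rfl fun c _ => (integral_mul_const _ _).symm

/-- Product of entrywise integrals, outer variable in the second factor. -/
theorem matInt_mul' (f k : G → Matrix ι ι ℂ)
    (hf : ∀ a b, Continuous fun g => f g a b) (hk : ∀ a b, Continuous fun g => k g a b)
    (a b : ι) :
    ((Matrix.of fun a b => ∫ g, f g a b ∂μ) * (Matrix.of fun a b => ∫ g, k g a b ∂μ)) a b
      = ∫ g, ∫ h, (f h * k g) a b ∂μ ∂μ := by
  have h1 : ∀ g : G, (∫ h, (f h * k g) a b ∂μ) = ∑ c, (∫ h, f h a c ∂μ) * k g c b := by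
    intro g
    simp only [Matrix.mul_apply]
    rw [integral_finset_sum _ (fun c _ => (myIntegrable μ (f := fun h => f h a c * k g c b) ((hf a c).mul continuous_const)))]
    exact Finset.sum_congr rfl fun c _ => integral_mul_const _ _
  simp_rw [h1]
  rw [integral_finset_sum _ (fun c _ => (myIntegrable μ (f := fun g => (∫ h, f h a c ∂μ) * k g c b) (continuous_const.mul (hk c b))))]
  simp only [Matrix.mul_apply, Matrix.of_apply]
  exact Finset.sum_congr rfl fun c _ => (integral_const_mul _ _).symm

/-- The entrywise integral of a continuous unitary representation is Hermitian. -/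
theorem repInt_herm (ρ : G → Matrix ι ι ℂ)
    (hstar : ∀ g : G, ρ g⁻¹ = (ρ g)ᴴ) :
    (Matrix.of fun a b => ∫ g, ρ g a b ∂μ)ᴴ = Matrix.of fun a b => ∫ g, ρ g a b ∂μ := by
  haveI := myInvInv μ
  ext a b
  simp only [conjTranspose_apply, Matrix.of_apply]
  rw [RCLike.star_def, ← integral_conj]
  have : ∀ g : G, (starRingEnd ℂ) (ρ g b a) = ρ g⁻¹ a b := by
    intro g; rw [hstar g]; simp [conjTranspose_apply]
  simp_rw [this]
  exact integral_inv_eq_self (fun g => ρ g a b) μ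

/-- The entrywise integral of a continuous unitary representation is idempotent. -/
theorem repInt_idem (ρ : G → Matrix ι ι ℂ)
    (hc : ∀ a b, Continuous fun g => ρ g a b)
    (hmul : ∀ g h : G, ρ (g * h) = ρ g * ρ h) :
    (Matrix.of fun a b => ∫ g, ρ g a b ∂μ) * (Matrix.of fun a b => ∫ g, ρ g a b ∂μ)
      = Matrix.of fun a b => ∫ g, ρ g a b ∂μ := by
  ext a b
  rw [matInt_mul μ ρ ρ hc hc a b]
  have h1 : ∀ g : G, (∫ h, (ρ g * ρ h) a b ∂μ) = ∫ h, ρ h a b ∂μ := by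
    intro g
    rw [show (fun h => (ρ g * ρ h) a b) = fun h => ρ (g * h) a b by
      funext h; rw [hmul]]
    exact integral_mul_left_eq_self (fun h => ρ h a b) g
  simp_rw [h1]
  simp [Matrix.of_apply, measure_univ]

theorem repInt_comm (ρ₁ ρ₂ : G → Matrix ι ι ℂ)
    (hc₁ : ∀ a b, Continuous fun g => ρ₁ g a b) (hc₂ : ∀ a b, Continuous fun g => ρ₂ g a b)
    (hcomm : ∀ g h : G, ρ₁ g * ρ₂ h = ρ₂ h * ρ₁ g) :
    (Matrix.of fun a b => ∫ g, ρ₁ g a b ∂μ) * (Matrix.of fun a b => ∫ g, ρ₂ g a b ∂μ)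
      = (Matrix.of fun a b => ∫ g, ρ₂ g a b ∂μ) * (Matrix.of fun a b => ∫ g, ρ₁ g a b ∂μ) := by
  ext a b
  rw [matInt_mul μ ρ₁ ρ₂ hc₁ hc₂ a b, matInt_mul' μ ρ₂ ρ₁ hc₂ hc₁ a b]
  simp_rw [hcomm]

theorem mySumInt {κ : Type*} [Fintype κ] (F : κ → κ → G → ℂ)
    (hF : ∀ k k', Continuous (F k k')) :
    ∑ k : κ, ∑ k' : κ, ∫ g, F k k' g ∂μ = ∫ g, ∑ k : κ, ∑ k' : κ, F k k' g ∂μ := by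
  rw [integral_finset_sum _
    (fun k _ => myIntegrable μ (continuous_finset_sum _ fun k' _ => hF k k'))]
  exact Finset.sum_congr rfl fun k _ =>
    (integral_finset_sum _ fun k' _ => myIntegrable μ (hF k k')).symm

end Aux

/-- For continuous unitary matrix representations `σ₁, σ₂, τ` of a compact group `G`, with
`A = ∫ χ_τ(g) σ₁(g) dμ(g)` and `T = ∫ σ₁(g) ⊗ₖ σ₂(g) dμ(g)`, the product
`(A ⊗ₖ 1) * T` is positive semidefinite. -/
theorem character_matrix_kronecker_haar_posSemidef
    {G : Type*} [Group G] [TopologicalSpace G] [IsTopologicalGroup G]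
    [CompactSpace G] [MeasurableSpace G] [BorelSpace G]
    (μ : Measure G) [Measure.IsHaarMeasure μ] [IsProbabilityMeasure μ]
    {n₁ n₂ m : ℕ}
    (σ₁ : G →* Matrix.unitaryGroup (Fin n₁) ℂ)
    (σ₂ : G →* Matrix.unitaryGroup (Fin n₂) ℂ)
    (τ : G →* Matrix.unitaryGroup (Fin m) ℂ)
    (hσ₁ : Continuous fun g : G => (σ₁ g : Matrix (Fin n₁) (Fin n₁) ℂ))
    (hσ₂ : Continuous fun g : G => (σ₂ g : Matrix (Fin n₂) (Fin n₂) ℂ))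
    (hτ : Continuous fun g : G => (τ g : Matrix (Fin m) (Fin m) ℂ))
    (A : Matrix (Fin n₁) (Fin n₁) ℂ)
    (hA : A = Matrix.of fun i i' : Fin n₁ =>
      ∫ g, (τ g : Matrix (Fin m) (Fin m) ℂ).trace *
        (σ₁ g : Matrix (Fin n₁) (Fin n₁) ℂ) i i' ∂μ)
    (T : Matrix (Fin n₁ × Fin n₂) (Fin n₁ × Fin n₂) ℂ)
    (hT : T = Matrix.of fun a b : Fin n₁ × Fin n₂ =>
      ∫ g, (((σ₁ g : Matrix (Fin n₁) (Fin n₁) ℂ) ⊗ₖ (σ₂ g : Matrix (Fin n₂) (Fin n₂) ℂ)) a b)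
        ∂μ) :
    ((A ⊗ₖ (1 : Matrix (Fin n₂) (Fin n₂) ℂ)) * T).PosSemidef := by
  haveI := myRightInv μ
  set χ : G → ℂ := fun g => (τ g : Matrix (Fin m) (Fin m) ℂ).trace with hχdef
  have hχc : Continuous χ := hτ.matrix_trace
  set ρ₁ : G → Matrix (((Fin n₁ × Fin n₂) × Fin m) × Fin m) (((Fin n₁ × Fin n₂) × Fin m) × Fin m) ℂ :=
    fun g => (((σ₁ g : Matrix (Fin n₁) (Fin n₁) ℂ) ⊗ₖ (1 : Matrix (Fin n₂) (Fin n₂) ℂ))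
        ⊗ₖ (τ g : Matrix (Fin m) (Fin m) ℂ)) ⊗ₖ (1 : Matrix (Fin m) (Fin m) ℂ) with hρ₁def
  set ρ₂ : G → Matrix (((Fin n₁ × Fin n₂) × Fin m) × Fin m) (((Fin n₁ × Fin n₂) × Fin m) × Fin m) ℂ :=
    fun g => (((1 : Matrix (Fin n₁) (Fin n₁) ℂ) ⊗ₖ (σ₂ g : Matrix (Fin n₂) (Fin n₂) ℂ))
        ⊗ₖ (1 : Matrix (Fin m) (Fin m) ℂ))
        ⊗ₖ ((τ g : Matrix (Fin m) (Fin m) ℂ).map (starRingEnd ℂ)) with hρ₂def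
  -- coercion lemmas
  have coe1 : ∀ g h : G, ((σ₁ (g * h) : Matrix (Fin n₁) (Fin n₁) ℂ))
      = (σ₁ g : Matrix (Fin n₁) (Fin n₁) ℂ) * (σ₁ h : Matrix (Fin n₁) (Fin n₁) ℂ) := by
    intro g h; rw [_root_.map_mul]; rfl
  have coe2 : ∀ g h : G, ((σ₂ (g * h) : Matrix (Fin n₂) (Fin n₂) ℂ))
      = (σ₂ g : Matrix (Fin n₂) (Fin n₂) ℂ) * (σ₂ h : Matrix (Fin n₂) (Fin n₂) ℂ) := by
    intro g h; rw [_root_.map_mul]; rfl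
  have coe3 : ∀ g h : G, ((τ (g * h) : Matrix (Fin m) (Fin m) ℂ))
      = (τ g : Matrix (Fin m) (Fin m) ℂ) * (τ h : Matrix (Fin m) (Fin m) ℂ) := by
    intro g h; rw [_root_.map_mul]; rfl
  have coeinv1 : ∀ g : G, ((σ₁ g⁻¹ : Matrix (Fin n₁) (Fin n₁) ℂ))
      = (σ₁ g : Matrix (Fin n₁) (Fin n₁) ℂ)ᴴ := by
    intro g
    rw [map_inv, ← Unitary.star_eq_inv, Unitary.coe_star, Matrix.star_eq_conjTranspose]
  have coeinv2 : ∀ g : G, ((σ₂ g⁻¹ : Matrix (Fin n₂) (Fin n₂) ℂ))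
      = (σ₂ g : Matrix (Fin n₂) (Fin n₂) ℂ)ᴴ := by
    intro g
    rw [map_inv, ← Unitary.star_eq_inv, Unitary.coe_star, Matrix.star_eq_conjTranspose]
  have coeinv3 : ∀ g : G, ((τ g⁻¹ : Matrix (Fin m) (Fin m) ℂ))
      = (τ g : Matrix (Fin m) (Fin m) ℂ)ᴴ := by
    intro g
    rw [map_inv, ← Unitary.star_eq_inv, Unitary.coe_star, Matrix.star_eq_conjTranspose]
  -- continuity of entries
  have hc₁ : ∀ a b, Continuous fun g => ρ₁ g a b := by
    intro a b
    simp only [hρ₁def, Matrix.kroneckerMap_apply]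
    exact (((hσ₁.matrix_elem _ _).mul continuous_const).mul (hτ.matrix_elem _ _)).mul
      continuous_const
  have hc₂ : ∀ a b, Continuous fun g => ρ₂ g a b := by
    intro a b
    simp only [hρ₂def, Matrix.kroneckerMap_apply, Matrix.map_apply]
    exact ((continuous_const.mul (hσ₂.matrix_elem _ _)).mul continuous_const).mul
      (hτ.matrix_elem _ _).star
  -- homomorphism properties
  have hmul₁ : ∀ g h : G, ρ₁ (g * h) = ρ₁ g * ρ₁ h := by
    intro g h
    simp only [hρ₁def, ← Matrix.mul_kronecker_mul, one_mul, mul_one, coe1, coe3]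
  have hmul₂ : ∀ g h : G, ρ₂ (g * h) = ρ₂ g * ρ₂ h := by
    intro g h
    simp only [hρ₂def, ← Matrix.mul_kronecker_mul, one_mul, mul_one, coe2, coe3,
      Matrix.map_mul]
  have hstar₁ : ∀ g : G, ρ₁ g⁻¹ = (ρ₁ g)ᴴ := by
    intro g
    simp only [hρ₁def, kron_conjT, Matrix.conjTranspose_one, coeinv1, coeinv3]
  have hstar₂ : ∀ g : G, ρ₂ g⁻¹ = (ρ₂ g)ᴴ := by
    intro g
    simp only [hρ₂def, kron_conjT, Matrix.conjTranspose_one, coeinv2, coeinv3]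
    congr 1
  have hcommρ : ∀ g h : G, ρ₂ g * ρ₁ h = ρ₁ h * ρ₂ g := by
    intro g h
    simp only [hρ₁def, hρ₂def, ← Matrix.mul_kronecker_mul, one_mul, mul_one]
  -- the integrated projections
  set Q₁ : Matrix (((Fin n₁ × Fin n₂) × Fin m) × Fin m) (((Fin n₁ × Fin n₂) × Fin m) × Fin m) ℂ :=
    Matrix.of fun a b => ∫ g, ρ₁ g a b ∂μ with hQ₁def
  set Q₂ : Matrix (((Fin n₁ × Fin n₂) × Fin m) × Fin m) (((Fin n₁ × Fin n₂) × Fin m) × Fin m) ℂ :=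
    Matrix.of fun a b => ∫ g, ρ₂ g a b ∂μ with hQ₂def
  set N : Matrix (((Fin n₁ × Fin n₂) × Fin m) × Fin m) (((Fin n₁ × Fin n₂) × Fin m) × Fin m) ℂ :=
    Q₂ * Q₁ with hNdef
  have hQ₁h : Q₁ᴴ = Q₁ := repInt_herm μ ρ₁ hstar₁
  have hQ₂h : Q₂ᴴ = Q₂ := repInt_herm μ ρ₂ hstar₂
  have hQ₁i : Q₁ * Q₁ = Q₁ := repInt_idem μ ρ₁ hc₁ hmul₁
  have hQ₂i : Q₂ * Q₂ = Q₂ := repInt_idem μ ρ₂ hc₂ hmul₂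
  have hQcomm : Q₂ * Q₁ = Q₁ * Q₂ := repInt_comm μ ρ₂ ρ₁ hc₂ hc₁ hcommρ
  have hNherm : Nᴴ = N := by
    rw [hNdef, Matrix.conjTranspose_mul, hQ₁h, hQ₂h, ← hQcomm]
  have hNidem : N * N = N := by
    rw [hNdef]
    calc Q₂ * Q₁ * (Q₂ * Q₁) = Q₂ * (Q₁ * Q₂) * Q₁ := by simp only [mul_assoc]
      _ = Q₂ * (Q₂ * Q₁) * Q₁ := by rw [← hQcomm]
      _ = Q₂ * Q₂ * (Q₁ * Q₁) := by simp only [mul_assoc]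
      _ = Q₂ * Q₁ := by rw [hQ₁i, hQ₂i]
  have hNpsd : N.PosSemidef := by
    have h := Matrix.posSemidef_conjTranspose_mul_self N
    rwa [hNherm, hNidem] at h
  -- pointwise product of the two representations
  have hprod : ∀ g h : G, ρ₂ g * ρ₁ h
      = (((σ₁ h : Matrix (Fin n₁) (Fin n₁) ℂ) ⊗ₖ (σ₂ g : Matrix (Fin n₂) (Fin n₂) ℂ))
          ⊗ₖ (τ h : Matrix (Fin m) (Fin m) ℂ))
          ⊗ₖ ((τ g : Matrix (Fin m) (Fin m) ℂ).map (starRingEnd ℂ)) := by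
    intro g h
    simp only [hρ₁def, hρ₂def, ← Matrix.mul_kronecker_mul, one_mul, mul_one]
  -- pointwise trace identity
  have hχtr : ∀ g h : G, χ (h * g⁻¹)
      = ∑ k : Fin m, ∑ k' : Fin m, (τ h : Matrix (Fin m) (Fin m) ℂ) k k' *
          (starRingEnd ℂ) ((τ g : Matrix (Fin m) (Fin m) ℂ) k k') := by
    intro g h
    rw [hχdef]
    simp only [coe3, coeinv3]
    simp [Matrix.trace, Matrix.diag, Matrix.mul_apply, Matrix.conjTranspose_apply,
      RCLike.star_def]
  have hpt : ∀ (g h : G) (a b : Fin n₁ × Fin n₂),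
      (∑ k : Fin m, ∑ k' : Fin m, (ρ₂ g * ρ₁ h) ((a,k),k) ((b,k'),k'))
        = χ (h * g⁻¹) * (((σ₁ h : Matrix (Fin n₁) (Fin n₁) ℂ)
            ⊗ₖ (σ₂ g : Matrix (Fin n₂) (Fin n₂) ℂ)) a b) := by
    intro g h a b
    rw [hprod g h, hχtr g h, Finset.sum_mul]
    refine Finset.sum_congr rfl fun k _ => ?_
    rw [Finset.sum_mul]
    refine Finset.sum_congr rfl fun k' _ => ?_
    simp only [Matrix.kroneckerMap_apply, Matrix.map_apply]
    ring
  -- continuity facts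
  have hcρprod : ∀ (g : G) p q, Continuous fun h => (ρ₂ g * ρ₁ h) p q := by
    intro g p q
    simp only [Matrix.mul_apply]
    exact continuous_finset_sum _ fun c _ => continuous_const.mul (hc₁ c q)
  have hcont_in : ∀ p q, Continuous fun g => ∫ h, (ρ₂ g * ρ₁ h) p q ∂μ := by
    intro p q
    simp_rw [matInt_inner μ ρ₂ ρ₁ hc₁]
    exact continuous_finset_sum _ fun c _ => (hc₂ p c).mul continuous_const
  have hfa : ∀ a c, Continuous fun g =>
      (χ g • ((σ₁ g : Matrix (Fin n₁) (Fin n₁) ℂ) ⊗ₖ (1 : Matrix (Fin n₂) (Fin n₂) ℂ))) a c := by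
    intro a c
    simp only [Matrix.smul_apply, Matrix.kroneckerMap_apply, smul_eq_mul]
    exact hχc.mul ((hσ₁.matrix_elem _ _).mul continuous_const)
  have hft : ∀ a c, Continuous fun g =>
      ((σ₁ g : Matrix (Fin n₁) (Fin n₁) ℂ) ⊗ₖ (σ₂ g : Matrix (Fin n₂) (Fin n₂) ℂ)) a c := by
    intro a c
    simp only [Matrix.kroneckerMap_apply]
    exact (hσ₁.matrix_elem _ _).mul (hσ₂.matrix_elem _ _)
  -- the Kronecker factor A ⊗ₖ 1 as an entrywise integral
  have hA1 : A ⊗ₖ (1 : Matrix (Fin n₂) (Fin n₂) ℂ)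
      = Matrix.of fun a c : Fin n₁ × Fin n₂ =>
          ∫ g, (χ g • ((σ₁ g : Matrix (Fin n₁) (Fin n₁) ℂ)
            ⊗ₖ (1 : Matrix (Fin n₂) (Fin n₂) ℂ))) a c ∂μ := by
    rw [hA]
    ext ⟨i, j⟩ ⟨i', j'⟩
    simp only [Matrix.kroneckerMap_apply, Matrix.of_apply, Matrix.smul_apply, smul_eq_mul,
      Matrix.one_apply]
    by_cases hjj : j = j'
    · simp [hjj, mul_one, hχdef]
    · simp [hjj]
  set W : Matrix (((Fin n₁ × Fin n₂) × Fin m) × Fin m) (Fin n₁ × Fin n₂) ℂ :=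
    Matrix.of fun (p : ((Fin n₁ × Fin n₂) × Fin m) × Fin m) (c : Fin n₁ × Fin n₂) =>
      (if p.1.1 = c then (1:ℂ) else 0) * (if p.2 = p.1.2 then (1:ℂ) else 0) with hWdef
  have key : (A ⊗ₖ (1 : Matrix (Fin n₂) (Fin n₂) ℂ)) * T = Wᴴ * N * W := by
    ext a b
    have hLHS : ((A ⊗ₖ (1 : Matrix (Fin n₂) (Fin n₂) ℂ)) * T) a b
        = ∫ g, ∫ h, χ (h * g⁻¹) * (((σ₁ h : Matrix (Fin n₁) (Fin n₁) ℂ)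
            ⊗ₖ (σ₂ g : Matrix (Fin n₂) (Fin n₂) ℂ)) a b) ∂μ ∂μ := by
      rw [hA1, hT]
      rw [matInt_mul' μ _ _ hfa hft a b]
      have hpt2 : ∀ g h : G,
          ((χ h • ((σ₁ h : Matrix (Fin n₁) (Fin n₁) ℂ) ⊗ₖ (1 : Matrix (Fin n₂) (Fin n₂) ℂ))) *
            ((σ₁ g : Matrix (Fin n₁) (Fin n₁) ℂ) ⊗ₖ (σ₂ g : Matrix (Fin n₂) (Fin n₂) ℂ))) a b
          = χ h * (((σ₁ (h * g) : Matrix (Fin n₁) (Fin n₁) ℂ)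
              ⊗ₖ (σ₂ g : Matrix (Fin n₂) (Fin n₂) ℂ)) a b) := by
        intro g h
        rw [Matrix.smul_mul, ← Matrix.mul_kronecker_mul, one_mul, ← coe1]
        simp [smul_eq_mul]
      simp_rw [hpt2]
      refine congrArg (fun f : G → ℂ => ∫ g, f g ∂μ) (funext fun g => ?_)
      have hsub := integral_mul_right_eq_self (μ := μ)
        (f := fun h => χ (h * g⁻¹) * (((σ₁ h : Matrix (Fin n₁) (Fin n₁) ℂ)
          ⊗ₖ (σ₂ g : Matrix (Fin n₂) (Fin n₂) ℂ)) a b)) g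
      simp only [mul_inv_cancel_right] at hsub
      exact hsub
    have hRHS : (Wᴴ * N * W) a b
        = ∫ g, ∫ h, χ (h * g⁻¹) * (((σ₁ h : Matrix (Fin n₁) (Fin n₁) ℂ)
            ⊗ₖ (σ₂ g : Matrix (Fin n₂) (Fin n₂) ℂ)) a b) ∂μ ∂μ := by
      rw [hWdef, WNW]
      have hNentry : ∀ p q, N p q = ∫ g, ∫ h, (ρ₂ g * ρ₁ h) p q ∂μ ∂μ := fun p q =>
        matInt_mul μ ρ₂ ρ₁ hc₂ hc₁ p q
      simp_rw [hNentry]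
      rw [mySumInt μ (fun k k' g => ∫ h, (ρ₂ g * ρ₁ h) ((a,k),k) ((b,k'),k') ∂μ)
        (fun k k' => hcont_in _ _)]
      refine congrArg (fun f : G → ℂ => ∫ g, f g ∂μ) (funext fun g => ?_)
      rw [mySumInt μ (fun k k' h => (ρ₂ g * ρ₁ h) ((a,k),k) ((b,k'),k'))
        (fun k k' => hcρprod g _ _)]
      refine congrArg (fun f : G → ℂ => ∫ h, f h ∂μ) (funext fun h => ?_)
      exact hpt g h a b
    rw [hLHS, hRHS]
  rw [key]
  exact hNpsd.conjTranspose_mul_mul_same W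
end

section
/- Let G be a compact topological group equipped with its Borel σ-algebra and let μ be the normalized Haar probability measure on G. Fix k ≥ 1, for each i ∈ Fin k let τᵢ be a continuous unitary matrix representation of G with character χ_{τᵢ}, and for each pair i < j in Fin k let ρ_{ij} be a continuous unitary matrix representation of G with character χ_{ρ_{ij}}. Then the complex number I = ∫_{G^k} (∏_{i} χ_{τᵢ}(gᵢ)) · (∏_{i<j} χ_{ρ_{ij}}(gᵢ · gⱼ⁻¹)) dμ^{⊗k}(g) is a nonnegative real number: its imaginary part is 0 and its real part is ≥ 0. -/
open MeasureTheory
open scoped ComplexOrder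

namespace ClosedSpinNet

open scoped Matrix

variable {G : Type*} [Group G] {k : ℕ} {m : Fin k → ℕ} {p : Fin k → Fin k → ℕ}

abbrev PairIdx (k : ℕ) := {e : Fin k × Fin k // e.1 < e.2}

abbrev Idx (m : Fin k → ℕ) (p : Fin k → Fin k → ℕ) :=
  ((i : Fin k) → Fin (m i) × Fin (m i)) ×
  ((e : PairIdx k) → Fin (p e.1.1 e.1.2) × Fin (p e.1.1 e.1.2))

noncomputable def fEnt (τ : (i : Fin k) → G →* Matrix.unitaryGroup (Fin (m i)) ℂ)
    (ρ : (i j : Fin k) → G →* Matrix.unitaryGroup (Fin (p i j)) ℂ)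
    (g : Fin k → G) (s : Idx m p) : ℂ :=
  (∏ i, (τ i (g i) : Matrix (Fin (m i)) (Fin (m i)) ℂ) (s.1 i).1 (s.1 i).2) *
  (∏ e : PairIdx k,
    ((ρ e.1.1 e.1.2 (g e.1.1) : Matrix (Fin (p e.1.1 e.1.2)) (Fin (p e.1.1 e.1.2)) ℂ) *
      star (ρ e.1.1 e.1.2 (g e.1.2) : Matrix (Fin (p e.1.1 e.1.2)) (Fin (p e.1.1 e.1.2)) ℂ))
      (s.2 e).1 (s.2 e).2)

noncomputable def Phi (τ : (i : Fin k) → G →* Matrix.unitaryGroup (Fin (m i)) ℂ)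
    (ρ : (i j : Fin k) → G →* Matrix.unitaryGroup (Fin (p i j)) ℂ)
    (g : Fin k → G) : ℂ :=
  (∏ i, (τ i (g i) : Matrix (Fin (m i)) (Fin (m i)) ℂ).trace) *
  (∏ e : PairIdx k,
    (ρ e.1.1 e.1.2 (g e.1.1 * (g e.1.2)⁻¹) :
      Matrix (Fin (p e.1.1 e.1.2)) (Fin (p e.1.1 e.1.2)) ℂ).trace)

lemma traceEntry {n : ℕ} (M N : Matrix (Fin n) (Fin n) ℂ) :
    ∑ ab : Fin n × Fin n, (starRingEnd ℂ) (M ab.1 ab.2) * N ab.1 ab.2 = (Mᴴ * N).trace := by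
  rw [Fintype.sum_prod_type]
  simp only [Matrix.trace, Matrix.diag, Matrix.mul_apply, Matrix.conjTranspose_apply]
  rw [Finset.sum_comm]
  rfl

lemma trace_factor_tau {n : ℕ} (σ : G →* Matrix.unitaryGroup (Fin n) ℂ) (a b : G) :
    (((σ a : Matrix (Fin n) (Fin n) ℂ))ᴴ * (σ b : Matrix (Fin n) (Fin n) ℂ)).trace
      = (σ (a⁻¹ * b) : Matrix (Fin n) (Fin n) ℂ).trace := by
  have h : ((σ a : Matrix (Fin n) (Fin n) ℂ))ᴴ * (σ b : Matrix (Fin n) (Fin n) ℂ)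
      = (σ (a⁻¹ * b) : Matrix (Fin n) (Fin n) ℂ) := by
    rw [map_mul, map_inv, MulMemClass.coe_mul, ← Unitary.star_eq_inv, Unitary.coe_star,
      Matrix.star_eq_conjTranspose]
  rw [h]

lemma trace_factor_rho {n : ℕ} (σ : G →* Matrix.unitaryGroup (Fin n) ℂ) (a b c d : G) :
    ((((σ a : Matrix (Fin n) (Fin n) ℂ)) * star ((σ b : Matrix (Fin n) (Fin n) ℂ)))ᴴ *
      (((σ c : Matrix (Fin n) (Fin n) ℂ)) * star ((σ d : Matrix (Fin n) (Fin n) ℂ)))).trace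
      = (σ ((a⁻¹ * c) * (b⁻¹ * d)⁻¹) : Matrix (Fin n) (Fin n) ℂ).trace := by
  rw [← Matrix.star_eq_conjTranspose, star_mul, star_star]
  have key : ((σ b : Matrix (Fin n) (Fin n) ℂ) * star ((σ a : Matrix (Fin n) (Fin n) ℂ))) *
      ((σ c : Matrix (Fin n) (Fin n) ℂ) * star ((σ d : Matrix (Fin n) (Fin n) ℂ)))
      = (σ (b * (a⁻¹ * (c * d⁻¹))) : Matrix (Fin n) (Fin n) ℂ) := by
    simp only [map_mul, map_inv, MulMemClass.coe_mul, ← Unitary.star_eq_inv, Unitary.coe_star,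
      mul_assoc]
  rw [key]
  have h2 : (σ (b * (a⁻¹ * (c * d⁻¹))) : Matrix (Fin n) (Fin n) ℂ).trace
      = (σ ((a⁻¹ * (c * d⁻¹)) * b) : Matrix (Fin n) (Fin n) ℂ).trace := by
    have h3 : (σ (b * (a⁻¹ * (c * d⁻¹))) : Matrix (Fin n) (Fin n) ℂ)
        = (σ b : Matrix (Fin n) (Fin n) ℂ) * (σ (a⁻¹ * (c * d⁻¹)) : Matrix (Fin n) (Fin n) ℂ) := by
      rw [map_mul, MulMemClass.coe_mul]
    have h4 : (σ ((a⁻¹ * (c * d⁻¹)) * b) : Matrix (Fin n) (Fin n) ℂ)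
        = (σ (a⁻¹ * (c * d⁻¹)) : Matrix (Fin n) (Fin n) ℂ) * (σ b : Matrix (Fin n) (Fin n) ℂ) := by
      rw [map_mul, MulMemClass.coe_mul]
    rw [h3, h4, Matrix.trace_mul_comm]
  rw [h2]
  congr 2
  group


lemma sum_pi_prod {ι : Type*} [Fintype ι] [DecidableEq ι] {κ : ι → Type*}
    [∀ i, Fintype (κ i)] (f : (i : ι) → κ i → ℂ) :
    ∑ s : (i : ι) → κ i, ∏ i, f i (s i) = ∏ i, ∑ j, f i j := by
  rw [Finset.prod_univ_sum, Fintype.piFinset_univ]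

lemma sum_conj_prod {ι : Type*} [Fintype ι] [DecidableEq ι] {d : ι → ℕ}
    (M N : (i : ι) → Matrix (Fin (d i)) (Fin (d i)) ℂ) :
    ∑ s : (i : ι) → Fin (d i) × Fin (d i),
      (starRingEnd ℂ) (∏ i, M i (s i).1 (s i).2) * (∏ i, N i (s i).1 (s i).2)
      = ∏ i, ((M i)ᴴ * N i).trace := by
  simp only [map_prod, ← Finset.prod_mul_distrib]
  rw [sum_pi_prod (fun i (ab : Fin (d i) × Fin (d i)) =>
    (starRingEnd ℂ) (M i ab.1 ab.2) * N i ab.1 ab.2)]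
  exact Finset.prod_congr rfl fun i _ => traceEntry (M i) (N i)

lemma sum_conj_mul (τ : (i : Fin k) → G →* Matrix.unitaryGroup (Fin (m i)) ℂ)
    (ρ : (i j : Fin k) → G →* Matrix.unitaryGroup (Fin (p i j)) ℂ)
    (x y : Fin k → G) :
    ∑ s : Idx m p, (starRingEnd ℂ) (fEnt τ ρ x s) * fEnt τ ρ y s = Phi τ ρ (x⁻¹ * y) := by
  simp only [fEnt]
  rw [Fintype.sum_prod_type]
  have step1 : ∀ (a : (i : Fin k) → Fin (m i) × Fin (m i))
      (b : (e : PairIdx k) → Fin (p e.1.1 e.1.2) × Fin (p e.1.1 e.1.2)),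
      (starRingEnd ℂ) ((∏ i, (τ i (x i) : Matrix (Fin (m i)) (Fin (m i)) ℂ) (a i).1 (a i).2) *
          ∏ e : PairIdx k,
            ((ρ e.1.1 e.1.2 (x e.1.1) : Matrix (Fin (p e.1.1 e.1.2)) (Fin (p e.1.1 e.1.2)) ℂ) *
              star (ρ e.1.1 e.1.2 (x e.1.2) : Matrix (Fin (p e.1.1 e.1.2)) (Fin (p e.1.1 e.1.2)) ℂ))
              (b e).1 (b e).2) *
        ((∏ i, (τ i (y i) : Matrix (Fin (m i)) (Fin (m i)) ℂ) (a i).1 (a i).2) *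
          ∏ e : PairIdx k,
            ((ρ e.1.1 e.1.2 (y e.1.1) : Matrix (Fin (p e.1.1 e.1.2)) (Fin (p e.1.1 e.1.2)) ℂ) *
              star (ρ e.1.1 e.1.2 (y e.1.2) : Matrix (Fin (p e.1.1 e.1.2)) (Fin (p e.1.1 e.1.2)) ℂ))
              (b e).1 (b e).2) =
      ((starRingEnd ℂ) (∏ i, (τ i (x i) : Matrix (Fin (m i)) (Fin (m i)) ℂ) (a i).1 (a i).2) *
          ∏ i, (τ i (y i) : Matrix (Fin (m i)) (Fin (m i)) ℂ) (a i).1 (a i).2) *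
        ((starRingEnd ℂ) (∏ e : PairIdx k,
            ((ρ e.1.1 e.1.2 (x e.1.1) : Matrix (Fin (p e.1.1 e.1.2)) (Fin (p e.1.1 e.1.2)) ℂ) *
              star (ρ e.1.1 e.1.2 (x e.1.2) : Matrix (Fin (p e.1.1 e.1.2)) (Fin (p e.1.1 e.1.2)) ℂ))
              (b e).1 (b e).2) *
          ∏ e : PairIdx k,
            ((ρ e.1.1 e.1.2 (y e.1.1) : Matrix (Fin (p e.1.1 e.1.2)) (Fin (p e.1.1 e.1.2)) ℂ) *
              star (ρ e.1.1 e.1.2 (y e.1.2) : Matrix (Fin (p e.1.1 e.1.2)) (Fin (p e.1.1 e.1.2)) ℂ))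
              (b e).1 (b e).2) := by
    intro a b
    rw [map_mul]
    ring
  simp only [step1]
  rw [← Finset.sum_mul_sum]
  unfold Phi
  congr 1
  · rw [sum_conj_prod]
    refine Finset.prod_congr rfl fun i _ => ?_
    rw [trace_factor_tau]
    simp
  · rw [sum_conj_prod]
    refine Finset.prod_congr rfl fun e _ => ?_
    rw [trace_factor_rho]
    simp


lemma pair_entry {n : ℕ} (σ : G →* Matrix.unitaryGroup (Fin n) ℂ) (x y : G) (a b : Fin n) :
    ((σ x : Matrix (Fin n) (Fin n) ℂ) * star (σ y : Matrix (Fin n) (Fin n) ℂ)) a b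
      = ∑ c, (σ x : Matrix (Fin n) (Fin n) ℂ) a c * star ((σ y : Matrix (Fin n) (Fin n) ℂ) b c) := by
  simp [Matrix.mul_apply, Matrix.star_apply]

section Analysis

variable [TopologicalSpace G] [IsTopologicalGroup G] [CompactSpace G]
  [MeasurableSpace G] [BorelSpace G]

lemma measurable_fEnt (τ : (i : Fin k) → G →* Matrix.unitaryGroup (Fin (m i)) ℂ)
    (ρ : (i j : Fin k) → G →* Matrix.unitaryGroup (Fin (p i j)) ℂ)
    (hτ : ∀ i, Continuous fun g : G => (τ i g : Matrix (Fin (m i)) (Fin (m i)) ℂ))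
    (hρ : ∀ i j, Continuous fun g : G => (ρ i j g : Matrix (Fin (p i j)) (Fin (p i j)) ℂ))
    (s : Idx m p) : Measurable fun g : Fin k → G => fEnt τ ρ g s := by
  unfold fEnt
  apply Measurable.mul
  · refine Finset.measurable_prod _ fun i _ => ?_
    have h1 : Continuous fun h : G =>
        (τ i h : Matrix (Fin (m i)) (Fin (m i)) ℂ) (s.1 i).1 (s.1 i).2 :=
      (continuous_apply (s.1 i).2).comp ((continuous_apply (s.1 i).1).comp (hτ i))
    exact h1.measurable.comp (measurable_pi_apply i)
  · refine Finset.measurable_prod _ fun e _ => ?_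
    have hent : (fun g : Fin k → G =>
        ((ρ e.1.1 e.1.2 (g e.1.1) : Matrix (Fin (p e.1.1 e.1.2)) (Fin (p e.1.1 e.1.2)) ℂ) *
          star (ρ e.1.1 e.1.2 (g e.1.2) : Matrix (Fin (p e.1.1 e.1.2)) (Fin (p e.1.1 e.1.2)) ℂ))
          (s.2 e).1 (s.2 e).2)
        = fun g : Fin k → G => ∑ c,
            (ρ e.1.1 e.1.2 (g e.1.1) : Matrix (Fin (p e.1.1 e.1.2)) (Fin (p e.1.1 e.1.2)) ℂ) (s.2 e).1 c *
              star ((ρ e.1.1 e.1.2 (g e.1.2) : Matrix (Fin (p e.1.1 e.1.2)) (Fin (p e.1.1 e.1.2)) ℂ) (s.2 e).2 c) :=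
      funext fun g => pair_entry _ _ _ _ _
    rw [hent]
    refine Finset.measurable_sum _ fun c _ => Measurable.mul ?_ ?_
    · have h1 : Continuous fun h : G =>
          (ρ e.1.1 e.1.2 h : Matrix (Fin (p e.1.1 e.1.2)) (Fin (p e.1.1 e.1.2)) ℂ) (s.2 e).1 c :=
        (continuous_apply c).comp ((continuous_apply (s.2 e).1).comp (hρ e.1.1 e.1.2))
      exact h1.measurable.comp (measurable_pi_apply e.1.1)
    · have h1 : Continuous fun h : G =>
          star ((ρ e.1.1 e.1.2 h : Matrix (Fin (p e.1.1 e.1.2)) (Fin (p e.1.1 e.1.2)) ℂ) (s.2 e).2 c) :=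
        continuous_star.comp ((continuous_apply c).comp ((continuous_apply (s.2 e).2).comp (hρ e.1.1 e.1.2)))
      exact h1.measurable.comp (measurable_pi_apply e.1.2)

lemma continuous_fEnt (τ : (i : Fin k) → G →* Matrix.unitaryGroup (Fin (m i)) ℂ)
    (ρ : (i j : Fin k) → G →* Matrix.unitaryGroup (Fin (p i j)) ℂ)
    (hτ : ∀ i, Continuous fun g : G => (τ i g : Matrix (Fin (m i)) (Fin (m i)) ℂ))
    (hρ : ∀ i j, Continuous fun g : G => (ρ i j g : Matrix (Fin (p i j)) (Fin (p i j)) ℂ))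
    (s : Idx m p) : Continuous fun g : Fin k → G => fEnt τ ρ g s := by
  unfold fEnt
  apply Continuous.mul
  · refine continuous_finset_prod _ fun i _ => ?_
    exact ((continuous_apply (s.1 i).2).comp ((continuous_apply (s.1 i).1).comp (hτ i))).comp
      (continuous_apply i)
  · refine continuous_finset_prod _ fun e _ => ?_
    have hent : (fun g : Fin k → G =>
        ((ρ e.1.1 e.1.2 (g e.1.1) : Matrix (Fin (p e.1.1 e.1.2)) (Fin (p e.1.1 e.1.2)) ℂ) *
          star (ρ e.1.1 e.1.2 (g e.1.2) : Matrix (Fin (p e.1.1 e.1.2)) (Fin (p e.1.1 e.1.2)) ℂ))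
          (s.2 e).1 (s.2 e).2)
        = fun g : Fin k → G => ∑ c,
            (ρ e.1.1 e.1.2 (g e.1.1) : Matrix (Fin (p e.1.1 e.1.2)) (Fin (p e.1.1 e.1.2)) ℂ) (s.2 e).1 c *
              star ((ρ e.1.1 e.1.2 (g e.1.2) : Matrix (Fin (p e.1.1 e.1.2)) (Fin (p e.1.1 e.1.2)) ℂ) (s.2 e).2 c) :=
      funext fun g => pair_entry _ _ _ _ _
    rw [hent]
    refine continuous_finset_sum _ fun c _ => Continuous.mul ?_ ?_
    · exact ((continuous_apply c).comp ((continuous_apply (s.2 e).1).comp (hρ e.1.1 e.1.2))).comp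
        (continuous_apply e.1.1)
    · exact (continuous_star.comp ((continuous_apply c).comp
        ((continuous_apply (s.2 e).2).comp (hρ e.1.1 e.1.2)))).comp (continuous_apply e.1.2)

lemma integrable_fEnt (μ : Measure G) [IsProbabilityMeasure μ]
    (τ : (i : Fin k) → G →* Matrix.unitaryGroup (Fin (m i)) ℂ)
    (ρ : (i j : Fin k) → G →* Matrix.unitaryGroup (Fin (p i j)) ℂ)
    (hτ : ∀ i, Continuous fun g : G => (τ i g : Matrix (Fin (m i)) (Fin (m i)) ℂ))
    (hρ : ∀ i j, Continuous fun g : G => (ρ i j g : Matrix (Fin (p i j)) (Fin (p i j)) ℂ))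
    (s : Idx m p) :
    Integrable (fun g : Fin k → G => fEnt τ ρ g s) (Measure.pi fun _ : Fin k => μ) := by
  refine ⟨(measurable_fEnt τ ρ hτ hρ s).aestronglyMeasurable, ?_⟩
  obtain ⟨C, hC⟩ := isCompact_univ.exists_bound_of_continuousOn
    (continuous_fEnt τ ρ hτ hρ s).continuousOn
  exact HasFiniteIntegral.of_bounded (C := C)
    (Filter.Eventually.of_forall fun g => hC g trivial)

end Analysis

end ClosedSpinNet

/-- The evaluation of the closed spin network built from `k` Haar intertwiners, with one
closed loop labeled `τᵢ` at each intertwiner and one closed loop labeled `ρᵢⱼ` linking each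
pair of intertwiners, namely
`I = ∫_{G^k} (∏ᵢ χ_{τᵢ}(gᵢ)) (∏_{i<j} χ_{ρᵢⱼ}(gᵢ gⱼ⁻¹)) dμ^{⊗k}(g)`,
is a nonnegative real number (in the partial order of `ℂ`: imaginary part `0`,
real part `≥ 0`). -/
theorem closed_spin_network_evaluation_nonneg
    {G : Type*} [Group G] [TopologicalSpace G] [IsTopologicalGroup G]
    [CompactSpace G] [MeasurableSpace G] [BorelSpace G]
    (μ : Measure G) [Measure.IsHaarMeasure μ] [IsProbabilityMeasure μ]
    {k : ℕ} (hk : 1 ≤ k)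
    {m : Fin k → ℕ} {p : Fin k → Fin k → ℕ}
    (τ : (i : Fin k) → G →* Matrix.unitaryGroup (Fin (m i)) ℂ)
    (ρ : (i j : Fin k) → G →* Matrix.unitaryGroup (Fin (p i j)) ℂ)
    (hτ : ∀ i, Continuous fun g : G => (τ i g : Matrix (Fin (m i)) (Fin (m i)) ℂ))
    (hρ : ∀ i j, Continuous fun g : G => (ρ i j g : Matrix (Fin (p i j)) (Fin (p i j)) ℂ)) :
    0 ≤ ∫ g : Fin k → G,
        (∏ i : Fin k, (τ i (g i) : Matrix (Fin (m i)) (Fin (m i)) ℂ).trace) *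
        (∏ e ∈ Finset.univ.filter (fun e : Fin k × Fin k => e.1 < e.2),
          (ρ e.1 e.2 (g e.1 * (g e.2)⁻¹) : Matrix (Fin (p e.1 e.2)) (Fin (p e.1 e.2)) ℂ).trace)
        ∂(Measure.pi fun _ : Fin k => μ) := by
  classical
  open ClosedSpinNet in
  set ν : Measure (Fin k → G) := Measure.pi fun _ : Fin k => μ with hν
  have hzero : (fun g : Fin k → G =>
      (∏ i : Fin k, (τ i (g i) : Matrix (Fin (m i)) (Fin (m i)) ℂ).trace) *
      (∏ e ∈ Finset.univ.filter (fun e : Fin k × Fin k => e.1 < e.2),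
        (ρ e.1 e.2 (g e.1 * (g e.2)⁻¹) : Matrix (Fin (p e.1 e.2)) (Fin (p e.1 e.2)) ℂ).trace))
      = fun g => ClosedSpinNet.Phi τ ρ g := by
    funext g
    unfold ClosedSpinNet.Phi
    congr 1
    exact Finset.prod_subtype _ (fun e => by simp) _
  rw [hzero]
  -- the vector of integrated entries
  set v : ClosedSpinNet.Idx m p → ℂ :=
    fun s => ∫ g, ClosedSpinNet.fEnt τ ρ g s ∂ν with hv
  have int_f : ∀ s : ClosedSpinNet.Idx m p,
      Integrable (fun g : Fin k → G => ClosedSpinNet.fEnt τ ρ g s) ν :=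
    fun s => ClosedSpinNet.integrable_fEnt μ τ ρ hτ hρ s
  have int_conj : ∀ s : ClosedSpinNet.Idx m p,
      Integrable (fun g : Fin k → G => (starRingEnd ℂ) (ClosedSpinNet.fEnt τ ρ g s)) ν :=
    fun s => (int_f s).norm.mono'
      (continuous_star.comp_aestronglyMeasurable (int_f s).1)
      (Filter.Eventually.of_forall fun g => by simp)
  have key : ∑ s : ClosedSpinNet.Idx m p, (starRingEnd ℂ) (v s) * v s
      = ∫ g, ClosedSpinNet.Phi τ ρ g ∂ν := by
    calc ∑ s : ClosedSpinNet.Idx m p, (starRingEnd ℂ) (v s) * v s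
        = ∫ x, ∑ s : ClosedSpinNet.Idx m p,
            (starRingEnd ℂ) (ClosedSpinNet.fEnt τ ρ x s) * v s ∂ν := by
          rw [integral_finset_sum _
            (fun s _ => ((int_conj s).mul_const (v s)))]
          refine Finset.sum_congr rfl fun s _ => ?_
          rw [integral_mul_const, integral_conj]
      _ = ∫ x, ∫ y, ∑ s : ClosedSpinNet.Idx m p,
            (starRingEnd ℂ) (ClosedSpinNet.fEnt τ ρ x s) * ClosedSpinNet.fEnt τ ρ y s ∂ν ∂ν := by
          refine integral_congr_ae (Filter.Eventually.of_forall fun x => ?_)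
          dsimp only
          rw [integral_finset_sum _ (fun s _ => (int_f s).const_mul _)]
          exact Finset.sum_congr rfl fun s _ => (integral_const_mul _ _).symm
      _ = ∫ x, ∫ y, ClosedSpinNet.Phi τ ρ (x⁻¹ * y) ∂ν ∂ν := by
          refine integral_congr_ae (Filter.Eventually.of_forall fun x => ?_)
          refine integral_congr_ae (Filter.Eventually.of_forall fun y => ?_)
          dsimp only
          exact ClosedSpinNet.sum_conj_mul τ ρ x y
      _ = ∫ _x, (∫ g, ClosedSpinNet.Phi τ ρ g ∂ν) ∂ν := by
          refine integral_congr_ae (Filter.Eventually.of_forall fun x => ?_)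
          dsimp only
          exact integral_mul_left_eq_self (ClosedSpinNet.Phi τ ρ) x⁻¹
      _ = ∫ g, ClosedSpinNet.Phi τ ρ g ∂ν := by
          simp
  rw [← key]
  exact Finset.sum_nonneg fun s _ => star_mul_self_nonneg (v s)
end

section
/- Let G be a compact topological group equipped with its Borel σ-algebra and let μ be the normalized Haar probability measure on G. Fix k ≥ 1 and a set E of pairs (i,j) with i < j in Fin k (the edge set of a graph on k vertices, a subgraph of the complete graph), and for each edge (i,j) ∈ E let ρ_{ij} be a continuous unitary matrix representation of G with character χ_{ρ_{ij}}. Then the complex number ∫_{G^k} ∏_{(i,j)∈E} χ_{ρ_{ij}}(gᵢ · gⱼ⁻¹) dμ^{⊗k}(g) is a nonnegative real number: its imaginary part is 0 and its real part is ≥ 0. -/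
open MeasureTheory
open scoped ComplexOrder ComplexConjugate

section SpinAux

variable {G : Type*} [Group G] [TopologicalSpace G] [IsTopologicalGroup G]
    [CompactSpace G] [MeasurableSpace G] [BorelSpace G]

omit [TopologicalSpace G] [IsTopologicalGroup G] [CompactSpace G] [MeasurableSpace G] [BorelSpace G] in
private lemma spin_entry_expand {n : ℕ} (σ : G →* Matrix.unitaryGroup (Fin n) ℂ) (x y : G)
    (a b : Fin n) :
    (σ (x * y⁻¹) : Matrix (Fin n) (Fin n) ℂ) a b
      = ∑ c, (σ x : Matrix (Fin n) (Fin n) ℂ) a c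
          * star ((σ y : Matrix (Fin n) (Fin n) ℂ) b c) := by
  rw [map_mul, map_inv]
  show ((σ x * (σ y)⁻¹ : Matrix.unitaryGroup (Fin n) ℂ) : Matrix (Fin n) (Fin n) ℂ) a b = _
  rw [Matrix.UnitaryGroup.mul_val, Matrix.UnitaryGroup.inv_val]
  simp [Matrix.mul_apply, Matrix.star_apply]

omit [CompactSpace G] in
private lemma spin_meas_entry {k n : ℕ} (σ : G →* Matrix.unitaryGroup (Fin n) ℂ)
    (hσ : Continuous fun g : G => (σ g : Matrix (Fin n) (Fin n) ℂ)) (i j : Fin k) (a b : Fin n) :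
    Measurable fun g : Fin k → G => (σ (g i * (g j)⁻¹) : Matrix (Fin n) (Fin n) ℂ) a b := by
  simp only [spin_entry_expand]
  refine Finset.measurable_sum _ fun c _ => ?_
  have h1 : Measurable fun g : G => (σ g : Matrix (Fin n) (Fin n) ℂ) a c :=
    (((continuous_apply c).comp ((continuous_apply a).comp hσ))).measurable
  have h2 : Measurable fun g : G => (σ g : Matrix (Fin n) (Fin n) ℂ) b c :=
    (((continuous_apply c).comp ((continuous_apply b).comp hσ))).measurable
  exact (h1.comp (measurable_pi_apply i)).mul
    (continuous_star.measurable.comp (h2.comp (measurable_pi_apply j)))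

omit [CompactSpace G] [MeasurableSpace G] [BorelSpace G] in
private lemma spin_cont_entry {k n : ℕ} (σ : G →* Matrix.unitaryGroup (Fin n) ℂ)
    (hσ : Continuous fun g : G => (σ g : Matrix (Fin n) (Fin n) ℂ)) (i j : Fin k) (a b : Fin n) :
    Continuous fun g : Fin k → G => (σ (g i * (g j)⁻¹) : Matrix (Fin n) (Fin n) ℂ) a b :=
  ((continuous_apply b).comp ((continuous_apply a).comp hσ)).comp
    ((continuous_apply i).mul (continuous_apply j).inv)

private lemma spin_integrable {X : Type*} [TopologicalSpace X] [CompactSpace X] [Nonempty X]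
    [MeasurableSpace X] (ν : Measure X) [IsFiniteMeasure ν] {f : X → ℂ}
    (hm : Measurable f) (hc : Continuous f) : Integrable f ν := by
  obtain ⟨x0, -, hx0⟩ := isCompact_univ.exists_isMaxOn Set.univ_nonempty hc.norm.continuousOn
  refine Integrable.mono' (integrable_const ‖f x0‖) hm.aestronglyMeasurable ?_
  exact Filter.Eventually.of_forall fun x => hx0 (Set.mem_univ x)

omit [TopologicalSpace G] [IsTopologicalGroup G] [CompactSpace G] [MeasurableSpace G] [BorelSpace G] in
private lemma spin_edge_sum {n : ℕ} (σ : G →* Matrix.unitaryGroup (Fin n) ℂ)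
    (h1 h2 g1 g2 : G) :
    ∑ y : Fin n × Fin n,
        star ((σ (h1 * h2⁻¹) : Matrix (Fin n) (Fin n) ℂ) y.1 y.2)
          * (σ (g1 * g2⁻¹) : Matrix (Fin n) (Fin n) ℂ) y.1 y.2
      = (σ (h1⁻¹ * g1 * (h2⁻¹ * g2)⁻¹) : Matrix (Fin n) (Fin n) ℂ).trace := by
  have key : ∀ u v : Matrix.unitaryGroup (Fin n) ℂ,
      ∑ y : Fin n × Fin n, star ((u : Matrix (Fin n) (Fin n) ℂ) y.1 y.2)
          * (v : Matrix (Fin n) (Fin n) ℂ) y.1 y.2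
        = ((u⁻¹ * v : Matrix.unitaryGroup (Fin n) ℂ) : Matrix (Fin n) (Fin n) ℂ).trace := by
    intro u v
    rw [Matrix.UnitaryGroup.mul_val, Matrix.UnitaryGroup.inv_val, Fintype.sum_prod_type,
      Matrix.trace]
    simp only [Matrix.diag, Matrix.mul_apply, Matrix.star_apply]
    rw [Finset.sum_comm]
  have tr_comm : ∀ a b : G, (σ (a * b) : Matrix (Fin n) (Fin n) ℂ).trace
      = (σ (b * a) : Matrix (Fin n) (Fin n) ℂ).trace := by
    intro a b
    rw [map_mul, map_mul, Matrix.UnitaryGroup.mul_val, Matrix.UnitaryGroup.mul_val,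
      Matrix.trace_mul_comm]
  rw [key, ← map_inv, ← map_mul]
  have h₁ : (h1 * h2⁻¹)⁻¹ * (g1 * g2⁻¹) = h2 * (h1⁻¹ * (g1 * g2⁻¹)) := by group
  have h₂ : h1⁻¹ * g1 * (h2⁻¹ * g2)⁻¹ = (h1⁻¹ * (g1 * g2⁻¹)) * h2 := by group
  rw [h₁, h₂, tr_comm]

end SpinAux

/-- Positivity of spin network evaluations on an arbitrary subgraph `E` of the complete graph
on `k` vertices: the evaluation
`∫_{G^k} ∏_{(i,j)∈E} χ_{ρᵢⱼ}(gᵢ gⱼ⁻¹) dμ^{⊗k}(g)`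
is a nonnegative real number (in the partial order of `ℂ`: imaginary part `0`,
real part `≥ 0`). -/
theorem subgraph_spin_network_evaluation_nonneg
    {G : Type*} [Group G] [TopologicalSpace G] [IsTopologicalGroup G]
    [CompactSpace G] [MeasurableSpace G] [BorelSpace G]
    (μ : Measure G) [Measure.IsHaarMeasure μ] [IsProbabilityMeasure μ]
    {k : ℕ} (hk : 1 ≤ k)
    (E : Finset (Fin k × Fin k)) (hE : ∀ e ∈ E, e.1 < e.2)
    {p : Fin k → Fin k → ℕ}
    (ρ : (i j : Fin k) → G →* Matrix.unitaryGroup (Fin (p i j)) ℂ)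
    (hρ : ∀ i j, Continuous fun g : G => (ρ i j g : Matrix (Fin (p i j)) (Fin (p i j)) ℂ)) :
    0 ≤ ∫ g : Fin k → G,
        ∏ e ∈ E,
          (ρ e.1 e.2 (g e.1 * (g e.2)⁻¹) : Matrix (Fin (p e.1 e.2)) (Fin (p e.1 e.2)) ℂ).trace
        ∂(Measure.pi fun _ : Fin k => μ) := by
  classical
  set ν : Measure (Fin k → G) := Measure.pi fun _ : Fin k => μ with hν
  set I : (Fin k → G) → ℂ := fun g =>
    ∏ e ∈ E,
      (ρ e.1 e.2 (g e.1 * (g e.2)⁻¹) : Matrix (Fin (p e.1 e.2)) (Fin (p e.1 e.2)) ℂ).trace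
    with hI
  let φ : (Fin k → G) → ((e : {e // e ∈ E}) → Fin (p e.1.1 e.1.2) × Fin (p e.1.1 e.1.2)) → ℂ :=
    fun g x => ∏ e : {e // e ∈ E},
      (ρ e.1.1 e.1.2 (g e.1.1 * (g e.1.2)⁻¹) :
        Matrix (Fin (p e.1.1 e.1.2)) (Fin (p e.1.1 e.1.2)) ℂ) (x e).1 (x e).2
  have hIdef : ∀ g, I g = ∏ e : {e // e ∈ E},
      (ρ e.1.1 e.1.2 (g e.1.1 * (g e.1.2)⁻¹) :
        Matrix (Fin (p e.1.1 e.1.2)) (Fin (p e.1.1 e.1.2)) ℂ).trace := by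
    intro g
    simp only [hI]
    exact (Finset.prod_coe_sort E fun e =>
      (ρ e.1 e.2 (g e.1 * (g e.2)⁻¹) :
        Matrix (Fin (p e.1 e.2)) (Fin (p e.1 e.2)) ℂ).trace).symm
  have measφ : ∀ x, Measurable fun g => φ g x := fun x =>
    Finset.measurable_prod _ fun e _ =>
      spin_meas_entry (ρ e.1.1 e.1.2) (hρ e.1.1 e.1.2) e.1.1 e.1.2 (x e).1 (x e).2
  have contφ : ∀ x, Continuous fun g => φ g x := fun x =>
    continuous_finset_prod _ fun e _ =>
      spin_cont_entry (ρ e.1.1 e.1.2) (hρ e.1.1 e.1.2) e.1.1 e.1.2 (x e).1 (x e).2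
  have intφ : ∀ x, Integrable (fun g => φ g x) ν :=
    fun x => spin_integrable ν (measφ x) (contφ x)
  have measI : Measurable I := by
    rw [hI]
    exact Finset.measurable_prod _ fun e _ =>
      Finset.measurable_sum _ fun a _ =>
        spin_meas_entry (ρ e.1 e.2) (hρ e.1 e.2) e.1 e.2 a a
  have contI : Continuous I := by
    rw [hI]
    exact continuous_finset_prod _ fun e _ =>
      continuous_finset_sum _ fun a _ =>
        spin_cont_entry (ρ e.1 e.2) (hρ e.1 e.2) e.1 e.2 a a
  have intI : Integrable I ν := spin_integrable ν measI contI
  set v : ((e : {e // e ∈ E}) → Fin (p e.1.1 e.1.2) × Fin (p e.1.1 e.1.2)) → ℂ :=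
    fun x => ∫ g, φ g x ∂ν with hv
  -- pointwise key identity
  have hA : ∀ h g : Fin k → G, (∑ x, star (φ h x) * φ g x) = I (h⁻¹ * g) := by
    intro h g
    set F : (e : {e // e ∈ E}) → Fin (p e.1.1 e.1.2) × Fin (p e.1.1 e.1.2) → ℂ :=
      fun e y =>
        star ((ρ e.1.1 e.1.2 (h e.1.1 * (h e.1.2)⁻¹) :
            Matrix (Fin (p e.1.1 e.1.2)) (Fin (p e.1.1 e.1.2)) ℂ) y.1 y.2)
          * (ρ e.1.1 e.1.2 (g e.1.1 * (g e.1.2)⁻¹) :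
            Matrix (Fin (p e.1.1 e.1.2)) (Fin (p e.1.1 e.1.2)) ℂ) y.1 y.2 with hF
    have step1 : ∀ x, star (φ h x) * φ g x = ∏ e : {e // e ∈ E}, F e (x e) := by
      intro x
      rw [star_prod, ← Finset.prod_mul_distrib]
    calc (∑ x, star (φ h x) * φ g x)
        = ∑ x ∈ Fintype.piFinset fun e : {e // e ∈ E} =>
            (Finset.univ : Finset (Fin (p e.1.1 e.1.2) × Fin (p e.1.1 e.1.2))),
            ∏ e : {e // e ∈ E}, F e (x e) := by
          rw [Fintype.piFinset_univ]
          exact Finset.sum_congr rfl fun x _ => step1 x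
      _ = ∏ e : {e // e ∈ E}, ∑ y, F e y := (Finset.prod_univ_sum _ _).symm
      _ = I (h⁻¹ * g) := by
          rw [hIdef]
          refine Finset.prod_congr rfl fun e _ => ?_
          rw [hF]
          exact spin_edge_sum (ρ e.1.1 e.1.2) (h e.1.1) (h e.1.2) (g e.1.1) (g e.1.2)
  have inner_eq : ∀ h : Fin k → G, (∑ x, star (φ h x) * v x) = ∫ g, I g ∂ν := by
    intro h
    calc (∑ x, star (φ h x) * v x)
        = ∑ x, ∫ g, star (φ h x) * φ g x ∂ν := by
          refine Finset.sum_congr rfl fun x _ => ?_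
          rw [hv, integral_const_mul]
      _ = ∫ g, ∑ x, star (φ h x) * φ g x ∂ν :=
          (integral_finset_sum _ fun x _ => (intφ x).const_mul _).symm
      _ = ∫ g, I (h⁻¹ * g) ∂ν := by simp_rw [hA h]
      _ = ∫ g, I g ∂ν := integral_mul_left_eq_self I h⁻¹
  have intstar : ∀ x, Integrable (fun h => star (φ h x) * v x) ν := by
    intro x
    refine spin_integrable ν ?_ ?_
    · exact (continuous_star.measurable.comp (measφ x)).mul_const _
    · exact ((continuous_star.comp (contφ x)).mul continuous_const)
  have outer : ∫ g, I g ∂ν = ∑ x, star (v x) * v x := by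
    have e2 : ∀ x, star (v x) * v x = ∫ h, star (φ h x) * v x ∂ν := by
      intro x
      have hs : star (v x) = ∫ h, star (φ h x) ∂ν := by
        rw [hv, ← starRingEnd_apply, ← integral_conj]
        simp only [starRingEnd_apply]
      rw [hs, ← integral_mul_const]
    calc ∫ g, I g ∂ν
        = ∫ _h : Fin k → G, (∫ g, I g ∂ν) ∂ν := by simp
      _ = ∫ h, ∑ x, star (φ h x) * v x ∂ν := by simp_rw [inner_eq]
      _ = ∑ x, ∫ h, star (φ h x) * v x ∂ν :=
          integral_finset_sum _ fun x _ => intstar x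
      _ = ∑ x, star (v x) * v x := by
          exact Finset.sum_congr rfl fun x _ => (e2 x).symm
  show 0 ≤ ∫ g, I g ∂ν
  rw [outer]
  exact Finset.sum_nonneg fun x _ => star_mul_self_nonneg _
end
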